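/- Let n ≥ 2, let h ∈ {1,…,n} and let ℓ be an integer with 3 ≤ ℓ and h + ℓ − 1 ≤ n, and let g be the directed arc (h, ℓ). Then ℓ · q({g}) = 2 · n!; that is, the number of linear orders on {1,…,n} under which the maximum of the ℓ-element interval Hod(g) = {h, h+1, …, h+ℓ−1} is an endpoint (h or h+ℓ−1) equals (2/ℓ) · n!. (This is the number of quasi-hereditary orderings of the directed Nakayama algebra KA_n/⟨g⟩ with one relation, a path of length ℓ.) -/

import Mathlib

theorem directed_one_generator_count (n h ℓ : ℕ) (hn : 2 ≤ n) (hh : 1 ≤ h)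
    (hℓ : 3 ≤ ℓ) (hend : h + ℓ - 1 ≤ n) :
    ℓ * Nat.card {σ : {v : ℕ // v ∈ Finset.Icc 1 n} ≃ Fin n //
        ∀ m : {v : ℕ // v ∈ Finset.Icc 1 n},
          (m : ℕ) ∈ Finset.Icc h (h + ℓ - 1) →
          (∀ v : {v : ℕ // v ∈ Finset.Icc 1 n},
              (v : ℕ) ∈ Finset.Icc h (h + ℓ - 1) → σ v ≤ σ m) →
          ((m : ℕ) = h ∨ (m : ℕ) = h + ℓ - 1)} = 2 * Nat.factorial n := by
  classical
  set V := {v : ℕ // v ∈ Finset.Icc 1 n} with hV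
  set d := h + ℓ - 1 with hd
  have hhn : h ≤ n := by omega
  have h1d : 1 ≤ d := by omega
  have hdn : d ≤ n := hend
  have hhd : h < d := by omega
  let a0 : V := ⟨h, by simp [Finset.mem_Icc]; omega⟩
  let a1 : V := ⟨d, by simp [Finset.mem_Icc]; omega⟩
  have ha01 : a0 ≠ a1 := by
    intro hc
    have : h = d := congrArg Subtype.val hc
    omega
  let HS : Finset V := Finset.univ.filter (fun v => (v : ℕ) ∈ Finset.Icc h d)
  have hmemHS : ∀ v : V, v ∈ HS ↔ (v : ℕ) ∈ Finset.Icc h d := by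
    intro v; simp [HS]
  have ha0 : a0 ∈ HS := by rw [hmemHS]; exact Finset.mem_Icc.2 ⟨le_refl _, hhd.le⟩
  have ha1 : a1 ∈ HS := by rw [hmemHS]; exact Finset.mem_Icc.2 ⟨hhd.le, le_refl _⟩
  have hHScard : HS.card = ℓ := by
    have himg : HS.image Subtype.val = Finset.Icc h d := by
      ext x
      simp only [Finset.mem_image]
      constructor
      · rintro ⟨v, hv, rfl⟩; exact (hmemHS v).1 hv
      · intro hx
        have hx' : x ∈ Finset.Icc 1 n := by
          simp only [Finset.mem_Icc] at hx ⊢; omega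
        exact ⟨⟨x, hx'⟩, (hmemHS _).2 hx, rfl⟩
    have := Finset.card_image_of_injective HS Subtype.val_injective
    rw [himg, Nat.card_Icc] at this
    omega
  have hHSne : ∀ σ : V ≃ Fin n, (HS.image σ).Nonempty :=
    fun σ => ⟨σ a0, Finset.mem_image_of_mem σ ha0⟩
  let F : (V ≃ Fin n) → V := fun σ => σ.symm ((HS.image σ).max' (hHSne σ))
  have hF1 : ∀ σ : V ≃ Fin n, F σ ∈ HS := by
    intro σ
    obtain ⟨v, hv, hveq⟩ := Finset.mem_image.1 ((HS.image σ).max'_mem (hHSne σ))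
    have : F σ = v := by simp only [F, ← hveq, Equiv.symm_apply_apply]
    rwa [this]
  have hF2 : ∀ σ : V ≃ Fin n, ∀ v ∈ HS, σ v ≤ σ (F σ) := by
    intro σ v hv
    have : σ (F σ) = (HS.image σ).max' (hHSne σ) := by
      simp [F, Equiv.apply_symm_apply]
    rw [this]
    exact Finset.le_max' _ _ (Finset.mem_image_of_mem σ hv)
  have hF3 : ∀ σ : V ≃ Fin n, ∀ a ∈ HS, (∀ v ∈ HS, σ v ≤ σ a) → F σ = a := by
    intro σ a ha hmax
    have h1 : σ (F σ) ≤ σ a := hmax _ (hF1 σ)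
    have h2 : σ a ≤ σ (F σ) := hF2 σ a ha
    exact (σ.injective (le_antisymm h2 h1)).symm
  -- equivariance under swaps within HS
  have hFswap : ∀ (a b : V), a ∈ HS → b ∈ HS → ∀ σ : V ≃ Fin n,
      F ((Equiv.swap a b).trans σ) = Equiv.swap a b (F σ) := by
    intro a b ha hb σ
    apply hF3
    · have := hF1 σ
      rcases eq_or_ne (F σ) a with rfl | hna
      · rwa [Equiv.swap_apply_left]
      rcases eq_or_ne (F σ) b with rfl | hnb
      · rwa [Equiv.swap_apply_right]
      · rwa [Equiv.swap_apply_of_ne_of_ne hna hnb]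
    · intro v hv
      have hv' : Equiv.swap a b v ∈ HS := by
        rcases eq_or_ne v a with rfl | hna
        · rwa [Equiv.swap_apply_left]
        rcases eq_or_ne v b with rfl | hnb
        · rwa [Equiv.swap_apply_right]
        · rwa [Equiv.swap_apply_of_ne_of_ne hna hnb]
      have : ((Equiv.swap a b).trans σ) v = σ (Equiv.swap a b v) := rfl
      rw [this]
      have : ((Equiv.swap a b).trans σ) (Equiv.swap a b (F σ)) = σ (F σ) := by
        simp [Equiv.trans_apply, Equiv.swap_apply_self]
      rw [this]
      exact hF2 σ _ hv'
  -- all fibers have the same cardinality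
  let c : ℕ := (Finset.univ.filter (fun σ : V ≃ Fin n => F σ = a0)).card
  have hfiber : ∀ a ∈ HS,
      (Finset.univ.filter (fun σ : V ≃ Fin n => F σ = a)).card = c := by
    intro a ha
    apply Finset.card_bij' (fun σ _ => (Equiv.swap a0 a).trans σ)
      (fun σ _ => (Equiv.swap a0 a).trans σ)
    · intro σ hσ
      simp only [Finset.mem_filter, Finset.mem_univ, true_and] at hσ ⊢
      rw [hFswap a0 a ha0 ha, hσ, Equiv.swap_apply_right]
    · intro σ hσ
      simp only [Finset.mem_filter, Finset.mem_univ, true_and] at hσ ⊢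
      rw [hFswap a0 a ha0 ha, hσ, Equiv.swap_apply_left]
    · intro σ _
      ext v
      simp [Equiv.trans_apply, Equiv.swap_apply_self]
    · intro σ _
      ext v
      simp [Equiv.trans_apply, Equiv.swap_apply_self]
  -- total count
  have hcardV : Fintype.card V = n := by
    have : Fintype.card V = (Finset.Icc 1 n).card := Fintype.card_coe _
    rw [this, Nat.card_Icc]; omega
  have htotal : Fintype.card (V ≃ Fin n) = Nat.factorial n := by
    rw [Fintype.card_equiv (Fintype.equivFinOfCardEq hcardV), hcardV]
  have hsum : Nat.factorial n = ℓ * c := by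
    rw [← htotal, ← Finset.card_univ]
    rw [Finset.card_eq_sum_card_fiberwise (f := F) (t := HS) (fun σ _ => hF1 σ)]
    rw [Finset.sum_congr rfl (fun a ha => hfiber a ha), Finset.sum_const, hHScard,
      smul_eq_mul]
  -- admissible set
  have hadm : Nat.card {σ : V ≃ Fin n //
      ∀ m : V, (m : ℕ) ∈ Finset.Icc h d →
        (∀ v : V, (v : ℕ) ∈ Finset.Icc h d → σ v ≤ σ m) →
        ((m : ℕ) = h ∨ (m : ℕ) = d)} = 2 * c := by
    rw [Nat.card_eq_fintype_card, Fintype.card_subtype]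
    have hiff : ∀ σ : V ≃ Fin n,
        (∀ m : V, (m : ℕ) ∈ Finset.Icc h d →
          (∀ v : V, (v : ℕ) ∈ Finset.Icc h d → σ v ≤ σ m) →
          ((m : ℕ) = h ∨ (m : ℕ) = d)) ↔ (F σ = a0 ∨ F σ = a1) := by
      intro σ
      constructor
      · intro hP
        have h1 := hF1 σ
        have h2 := hF2 σ
        rcases hP (F σ) ((hmemHS _).1 h1) (fun v hv => h2 v ((hmemHS v).2 hv)) with
          he | he
        · exact Or.inl (Subtype.ext he)
        · exact Or.inr (Subtype.ext he)
      · intro hor m hm hmax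
        have : F σ = m := hF3 σ m ((hmemHS m).2 hm)
          (fun v hv => hmax v ((hmemHS v).1 hv))
        rcases hor with he | he
        · left; rw [← this, he]
        · right; rw [← this, he]
    rw [Finset.filter_congr (fun σ _ => by simpa using (hiff σ))]
    rw [Finset.filter_or]
    rw [Finset.card_union_of_disjoint]
    · rw [hfiber a0 ha0, hfiber a1 ha1]; ring
    · rw [Finset.disjoint_left]
      intro σ h0 h1
      simp only [Finset.mem_filter, Finset.mem_univ, true_and] at h0 h1
      exact ha01 (h0.symm.trans h1)
  rw [hadm, hsum]; ring
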